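/- Under the i.i.d. sampling assumption, the deterministic tie-breaking order, and the strict-feasibility assumption that 𝒜 is nonempty and μ_τ(J*) > 1−α (where J* is the ≺-least element of 𝒜), the parameter set selected by Algorithm 1 converges to the population-optimal set: lim_{n→∞} P( J^{(n)} = J* ) = 1. -/

import Mathlib

open MeasureTheory ProbabilityTheory Filter
open scoped Classical

/-- A binary mask on a `W × H` grid: `true` encodes the value 1. -/
abbrev Mask (W H : ℕ) := Fin W × Fin H → Bool

/-- Intersection-over-Union of two binary masks, with the convention
`IoU A B = 1` when the union is empty. -/
noncomputable def IoU {W H : ℕ} (A B : Mask W H) : ℝ :=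
  if (Finset.univ.filter (fun p : Fin W × Fin H => A p = true ∨ B p = true)).card = 0 then 1
  else ((Finset.univ.filter (fun p : Fin W × Fin H => A p = true ∧ B p = true)).card : ℝ) /
    ((Finset.univ.filter (fun p : Fin W × Fin H => A p = true ∨ B p = true)).card : ℝ)

variable {𝒳 : Type*} [MeasurableSpace 𝒳] {W H k : ℕ}

/-- `μ_τ(J)`: the probability under the law `P` that some parameter index `j ∈ J`
produces a mask with `IoU` exceeding `τ` against the true mask. -/
noncomputable def muTau (P : Measure (𝒳 × Mask W H)) (f : 𝒳 → Fin k → Mask W H)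
    (τ : ℝ) (J : Finset (Fin k)) : ENNReal :=
  P {p | ∃ j ∈ J, τ < IoU p.2 (f p.1 j)}

/-- `Covers Z f α τ n ω J` says that the parameter set `J` covers at least a
`(1−α)` fraction of the first `n` calibration samples `Z 1 ω, …, Z n ω`:
`|⋃_{j ∈ J} S_j^{(n)}| ≥ (1−α)·n`. -/
def Covers (Z : ℕ → Ω → 𝒳 × Mask W H) (f : 𝒳 → Fin k → Mask W H) (α τ : ℝ)
    (n : ℕ) (ω : Ω) (J : Finset (Fin k)) : Prop :=
  (1 - α) * n ≤ (((Finset.Icc 1 n).filter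
    (fun i => ∃ j ∈ J, τ < IoU (Z i ω).2 (f (Z i ω).1 j))).card : ℝ)

/-- Under i.i.d. sampling, deterministic tie-breaking, and strict
feasibility (`𝒜 = {J : μ_τ(J) ≥ 1−α}` is nonempty with `≺`-least element `J*`
satisfying `μ_τ(J*) > 1−α`), the parameter set selected by Algorithm 1 converges
to the population-optimal set: `P(J^{(n)} = J*) → 1`. -/
theorem algorithm1_selects_optimal_set
    (hk : 1 ≤ k) {Ω : Type*} [MeasurableSpace Ω]
    (Pr : Measure Ω) [IsProbabilityMeasure Pr]
    (P : Measure (𝒳 × Mask W H)) [IsProbabilityMeasure P]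
    (f : 𝒳 → Fin k → Mask W H) (hf : ∀ j, Measurable (fun x => f x j))
    (α τ : ℝ) (hα : α ∈ Set.Ioo (0:ℝ) 1) (hτ : τ ∈ Set.Ioo (0:ℝ) 1)
    (Z : ℕ → Ω → 𝒳 × Mask W H) (hZmeas : ∀ i, Measurable (Z i))
    (hindep : iIndepFun Z Pr)
    (hlaw : ∀ i, Measure.map (Z i) Pr = P)
    (lt : Finset (Fin k) → Finset (Fin k) → Prop)
    (hlto : IsStrictTotalOrder (Finset (Fin k)) lt)
    (hltcard : ∀ J J' : Finset (Fin k), J.card < J'.card → lt J J')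
    (Jstar : Finset (Fin k))
    (hJstarMem : ENNReal.ofReal (1 - α) ≤ muTau P f τ Jstar)
    (hJstarLeast : ∀ J : Finset (Fin k),
      ENNReal.ofReal (1 - α) ≤ muTau P f τ J → Jstar = J ∨ lt Jstar J)
    (hJstarStrict : ENNReal.ofReal (1 - α) < muTau P f τ Jstar)
    (Jn : ℕ → Ω → Option (Finset (Fin k)))
    (hJn : ∀ (n : ℕ) (ω : Ω) (J : Finset (Fin k)), Jn n ω = some J ↔
      (Covers Z f α τ n ω J ∧
        ∀ J' : Finset (Fin k), Covers Z f α τ n ω J' → J = J' ∨ lt J J')) :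
    Tendsto (fun n : ℕ => Pr {ω | Jn n ω = some Jstar}) atTop (nhds 1) := by
  classical
  -- The event in sample space corresponding to a parameter set J
  set E : Finset (Fin k) → Set (𝒳 × Mask W H) :=
    fun J => {p | ∃ j ∈ J, τ < IoU p.2 (f p.1 j)} with hE
  have hEmeas : ∀ J, MeasurableSet (E J) := by
    intro J
    have hrw : E J = ⋃ j ∈ J, {p : 𝒳 × Mask W H | τ < IoU p.2 (f p.1 j)} := by
      ext p; simp [hE]
    rw [hrw]
    refine MeasurableSet.biUnion J.countable_toSet (fun j _ => ?_)
    have hm : Measurable fun p : 𝒳 × Mask W H => IoU p.2 (f p.1 j) := by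
      have h1 : Measurable fun p : 𝒳 × Mask W H => (p.2, f p.1 j) :=
        measurable_snd.prodMk ((hf j).comp measurable_fst)
      exact (measurable_of_countable (fun q : Mask W H × Mask W H => IoU q.1 q.2)).comp h1
    exact measurableSet_lt measurable_const hm
  -- indicator processes
  set X : Finset (Fin k) → ℕ → Ω → ℝ :=
    fun J i ω => Set.indicator (E J) (fun _ => (1:ℝ)) (Z (i+1) ω) with hXdef
  have hgmeas : ∀ J, Measurable (fun p : 𝒳 × Mask W H =>
      Set.indicator (E J) (fun _ => (1:ℝ)) p) :=
    fun J => measurable_const.indicator (hEmeas J)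
  have hXmeas : ∀ J i, Measurable (X J i) := fun J i => (hgmeas J).comp (hZmeas (i+1))
  -- the count in `Covers` equals a sum of indicators
  have hcard : ∀ (J : Finset (Fin k)) (n : ℕ) (ω : Ω),
      (((Finset.Icc 1 n).filter
        (fun i => ∃ j ∈ J, τ < IoU (Z i ω).2 (f (Z i ω).1 j))).card : ℝ)
      = ∑ i ∈ Finset.range n, X J i ω := by
    intro J n ω
    rw [Finset.card_filter]
    push_cast
    rw [show Finset.Icc 1 n = Finset.Ico 1 (n+1) by rw [Finset.Ico_add_one_right_eq_Icc],
      Finset.sum_Ico_eq_sum_range]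
    simp only [Nat.add_sub_cancel]
    refine Finset.sum_congr rfl fun i _ => ?_
    rw [Nat.add_comm 1 i]
    by_cases h : Z (i+1) ω ∈ E J
    · have h' : ∃ j ∈ J, τ < IoU (Z (i+1) ω).2 (f (Z (i+1) ω).1 j) := h
      rw [if_pos h', hXdef]
      simp [Set.indicator_of_mem h]
    · have h' : ¬ ∃ j ∈ J, τ < IoU (Z (i+1) ω).2 (f (Z (i+1) ω).1 j) := h
      rw [if_neg h', hXdef]
      simp [Set.indicator_of_notMem h]
  -- strong law of large numbers for each J
  have hSLLN : ∀ J : Finset (Fin k),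
      ∀ᵐ ω ∂Pr, Tendsto (fun n : ℕ => (∑ i ∈ Finset.range n, X J i ω) / n) atTop
        (nhds ((P (E J)).toReal)) := by
    intro J
    have hint : Integrable (X J 0) Pr := by
      have hrw : X J 0 = Set.indicator ((Z 1) ⁻¹' E J) (fun _ => (1:ℝ)) := by
        funext ω
        simp [hXdef, Set.indicator_apply, Set.mem_preimage]
      rw [hrw]
      exact (integrable_const (1:ℝ)).indicator ((hZmeas 1) (hEmeas J))
    have hindep' : Pairwise (Function.onFun (IndepFun · · Pr) (X J)) := by
      intro i j hij
      have h1 : IndepFun (Z (i+1)) (Z (j+1)) Pr := hindep.indepFun (by omega)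
      exact h1.comp (hgmeas J) (hgmeas J)
    have hident : ∀ i, IdentDistrib (X J i) (X J 0) Pr Pr := by
      intro i
      refine ⟨(hXmeas J i).aemeasurable, (hXmeas J 0).aemeasurable, ?_⟩
      have e1 : X J i = (fun p => Set.indicator (E J) (fun _ => (1:ℝ)) p) ∘ Z (i+1) := rfl
      have e0 : X J 0 = (fun p => Set.indicator (E J) (fun _ => (1:ℝ)) p) ∘ Z 1 := rfl
      rw [e1, e0, ← Measure.map_map (hgmeas J) (hZmeas (i+1)),
        ← Measure.map_map (hgmeas J) (hZmeas 1), hlaw (i+1), hlaw 1]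
    have hmean : (Pr[X J 0]) = (P (E J)).toReal := by
      have e0 : X J 0 = (fun p => Set.indicator (E J) (fun _ => (1:ℝ)) p) ∘ Z 1 := rfl
      have : (Pr[X J 0]) = ∫ p, Set.indicator (E J) (fun _ => (1:ℝ)) p ∂P := by
        rw [← hlaw 1]
        rw [integral_map (hZmeas 1).aemeasurable (hgmeas J).aestronglyMeasurable]
      rw [this]
      exact integral_indicator_one (μ := P) (hEmeas J)
    have := strong_law_ae_real (X J) hint hindep' hident
    rwa [hmean] at this
  -- population quantities
  have hα0 : (0:ℝ) ≤ 1 - α := by linarith [hα.2]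
  have hstar : 1 - α < (P (E Jstar)).toReal := by
    have h1 : (ENNReal.ofReal (1-α)).toReal < (P (E Jstar)).toReal :=
      ENNReal.toReal_strict_mono (measure_ne_top P _) hJstarStrict
    rwa [ENNReal.toReal_ofReal hα0] at h1
  have hbadlt : ∀ J' : Finset (Fin k), J' ≠ Jstar → ¬ lt Jstar J' →
      (P (E J')).toReal < 1 - α := by
    intro J' hne hnlt
    have hnot : ¬ (ENNReal.ofReal (1 - α) ≤ muTau P f τ J') := by
      intro hle
      rcases hJstarLeast J' hle with h | h
      · exact hne h.symm
      · exact hnlt h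
    have hlt' : muTau P f τ J' < ENNReal.ofReal (1 - α) := lt_of_not_ge hnot
    have h1 : (muTau P f τ J').toReal < (ENNReal.ofReal (1-α)).toReal :=
      ENNReal.toReal_strict_mono (by simp) hlt'
    rwa [ENNReal.toReal_ofReal hα0] at h1
  -- asymmetry of lt
  have hasym : ∀ a b, lt a b → ¬ lt b a := by
    intro a b hab hba
    exact (hlto.toIrrefl.irrefl a) (hlto.toIsTrans.trans _ _ _ hab hba)
  -- almost everywhere, eventually the algorithm selects Jstar
  have hAE : ∀ᵐ ω ∂Pr, ∀ᶠ n in atTop, Jn n ω = some Jstar := by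
    have hall : ∀ᵐ ω ∂Pr, ∀ J : Finset (Fin k),
        Tendsto (fun n : ℕ => (∑ i ∈ Finset.range n, X J i ω) / n) atTop
          (nhds ((P (E J)).toReal)) := ae_all_iff.2 hSLLN
    filter_upwards [hall] with ω hω
    have hcov : ∀ᶠ n in atTop, Covers Z f α τ n ω Jstar := by
      have h1 : ∀ᶠ n : ℕ in atTop,
          (1 - α) < (∑ i ∈ Finset.range n, X Jstar i ω) / n :=
        (hω Jstar).eventually (eventually_gt_nhds hstar)
      filter_upwards [h1, eventually_ge_atTop 1] with n hn hn1
      unfold Covers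
      rw [hcard Jstar n ω]
      have hnpos : (0:ℝ) < n := by exact_mod_cast hn1
      have := mul_le_mul_of_nonneg_right (le_of_lt hn) (le_of_lt hnpos)
      calc (1-α) * n ≤ ((∑ i ∈ Finset.range n, X Jstar i ω) / n) * n := this
        _ = ∑ i ∈ Finset.range n, X Jstar i ω := div_mul_cancel₀ _ (ne_of_gt hnpos)
    have hbad : ∀ J' : Finset (Fin k), J' ≠ Jstar → ¬ lt Jstar J' →
        ∀ᶠ n in atTop, ¬ Covers Z f α τ n ω J' := by
      intro J' hne hnlt
      have h1 : ∀ᶠ n : ℕ in atTop,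
          (∑ i ∈ Finset.range n, X J' i ω) / n < 1 - α :=
        (hω J').eventually (eventually_lt_nhds (hbadlt J' hne hnlt))
      filter_upwards [h1, eventually_ge_atTop 1] with n hn hn1
      intro hcov'
      unfold Covers at hcov'
      rw [hcard J' n ω] at hcov'
      have hnpos : (0:ℝ) < n := by exact_mod_cast hn1
      have h2 : (∑ i ∈ Finset.range n, X J' i ω) < (1 - α) * n := by
        have := mul_lt_mul_of_pos_right hn hnpos
        rwa [div_mul_cancel₀ _ (ne_of_gt hnpos)] at this
      linarith
    have hbadall : ∀ᶠ n in atTop, ∀ J' : Finset (Fin k),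
        J' ≠ Jstar → ¬ lt Jstar J' → ¬ Covers Z f α τ n ω J' := by
      rw [eventually_all]
      intro J'
      by_cases h1 : J' ≠ Jstar ∧ ¬ lt Jstar J'
      · filter_upwards [hbad J' h1.1 h1.2] with n hn _ _
        exact hn
      · filter_upwards with n h2 h3
        exact absurd ⟨h2, h3⟩ h1
    filter_upwards [hcov, hbadall] with n hc hb
    rw [hJn]
    refine ⟨hc, fun J' hJ' => ?_⟩
    rcases (haveI := hlto; trichotomous (r := lt) Jstar J') with h | h | h
    · exact Or.inr h
    · exact Or.inl h
    · exact absurd hJ' (hb J' (fun he => (hlto.toIrrefl.irrefl J') (he ▸ h))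
        (hasym _ _ h))
  -- measurability of the selection events
  have hCovmeas : ∀ (n : ℕ) (J : Finset (Fin k)),
      MeasurableSet {ω | Covers Z f α τ n ω J} := by
    intro n J
    have hrw : {ω | Covers Z f α τ n ω J} =
        {ω | (1 - α) * n ≤ ∑ i ∈ Finset.range n, X J i ω} := by
      ext ω
      simp only [Set.mem_setOf_eq, Covers, hcard J n ω]
    rw [hrw]
    exact measurableSet_le measurable_const
      (Finset.measurable_sum _ fun i _ => hXmeas J i)
  have hmeasev : ∀ n, MeasurableSet {ω | Jn n ω = some Jstar} := by
    intro n
    have hrw : {ω | Jn n ω = some Jstar} =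
        {ω | Covers Z f α τ n ω Jstar} ∩
        ⋂ J' : Finset (Fin k),
          {ω | Covers Z f α τ n ω J' → Jstar = J' ∨ lt Jstar J'} := by
      ext ω
      simp only [Set.mem_setOf_eq, Set.mem_inter_iff, Set.mem_iInter, hJn]
    rw [hrw]
    refine (hCovmeas n Jstar).inter (MeasurableSet.iInter fun J' => ?_)
    by_cases h : Jstar = J' ∨ lt Jstar J'
    · have : {ω : Ω | Covers Z f α τ n ω J' → Jstar = J' ∨ lt Jstar J'} = Set.univ := by
        ext ω; simp [h]
      rw [this]; exact MeasurableSet.univ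
    · have : {ω : Ω | Covers Z f α τ n ω J' → Jstar = J' ∨ lt Jstar J'} =
          {ω | Covers Z f α τ n ω J'}ᶜ := by
        ext ω; simp [h]
      rw [this]; exact (hCovmeas n J').compl
  -- conclude by convergence of measures
  have hfin := tendsto_measure_of_ae_tendsto_indicator_of_isFiniteMeasure
    (μ := Pr) (A := Set.univ) atTop MeasurableSet.univ hmeasev ?_
  · simpa using hfin
  · filter_upwards [hAE] with ω hω
    filter_upwards [hω] with n hn
    simp [hn]
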